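/- (Choi–Kraus operator-sum representation.) For every completely positive linear map Φ : M_n(ℂ) → M_m(ℂ) between complex matrix algebras there exists a finite family of m×n complex matrices {E_a}, which may be chosen with at most n·m members, such that Φ(ρ) = Σ_a E_a ρ E_a† for all ρ ∈ M_n(ℂ). -/

import Mathlib

open Matrix
open scoped ComplexOrder

/-- The tensor extension `id_k ⊗ Φ` of a linear map between matrix algebras, acting on
`kn × kn` matrices via the Kronecker-product identification
`M_k(ℂ) ⊗ M_n(ℂ) ≅ M_{kn}(ℂ)`. -/
def tensorExt {n m : ℕ} (Φ : Matrix (Fin n) (Fin n) ℂ →ₗ[ℂ] Matrix (Fin m) (Fin m) ℂ)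
    (k : ℕ) (M : Matrix (Fin k × Fin n) (Fin k × Fin n) ℂ) :
    Matrix (Fin k × Fin m) (Fin k × Fin m) ℂ :=
  Matrix.of fun p q => Φ (Matrix.of fun a b => M (p.1, a) (q.1, b)) p.2 q.2

/-- A linear map `Φ : M_n(ℂ) → M_m(ℂ)` is completely positive if for every `k ≥ 1` the
map `id_k ⊗ Φ` maps positive semidefinite matrices to positive semidefinite matrices. -/
def IsCompletelyPositive {n m : ℕ}
    (Φ : Matrix (Fin n) (Fin n) ℂ →ₗ[ℂ] Matrix (Fin m) (Fin m) ℂ) : Prop :=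
  ∀ (k : ℕ) (M : Matrix (Fin k × Fin n) (Fin k × Fin n) ℂ),
    M.PosSemidef → (tensorExt Φ k M).PosSemidef

/-- **Choi–Kraus operator-sum representation.**  Every completely positive linear map
`Φ : M_n(ℂ) → M_m(ℂ)` admits a family of `m × n` matrices `{E_a}` with at most `n·m`
members such that `Φ(ρ) = Σ_a E_a ρ E_a†` for all `ρ`. -/
theorem choi_kraus_opsum {n m : ℕ}
    (Φ : Matrix (Fin n) (Fin n) ℂ →ₗ[ℂ] Matrix (Fin m) (Fin m) ℂ)
    (hΦ : IsCompletelyPositive Φ) :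
    ∃ (N : ℕ) (E : Fin N → Matrix (Fin m) (Fin n) ℂ),
      N ≤ n * m ∧ ∀ ρ : Matrix (Fin n) (Fin n) ℂ, Φ ρ = ∑ a, E a * ρ * (E a)ᴴ := by
  classical
  set v : Matrix (Fin 1) (Fin n × Fin n) ℂ :=
    Matrix.of fun _ p => if p.1 = p.2 then 1 else 0 with hv
  have hMpsd : (vᴴ * v).PosSemidef := posSemidef_conjTranspose_mul_self v
  have hC : (tensorExt Φ n (vᴴ * v)).PosSemidef := hΦ n _ hMpsd
  obtain ⟨B, hB⟩ : ∃ B : Matrix (Fin n × Fin m) (Fin n × Fin m) ℂ,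
      tensorExt Φ n (vᴴ * v) = Bᴴ * B := by
    open scoped MatrixOrder in
    obtain ⟨B, hB⟩ := CStarAlgebra.nonneg_iff_eq_star_mul_self.mp hC.nonneg
    exact ⟨B, hB⟩
  set e : Fin (n * m) ≃ Fin n × Fin m := finProdFinEquiv.symm with he
  refine ⟨n * m, fun a => Matrix.of fun p i => star (B (e a) (i, p)), le_refl _, fun ρ => ?_⟩
  have key : ∀ (i j : Fin n) (p q : Fin m),
      Φ (Matrix.single i j 1) p q = ∑ z : Fin n × Fin m, star (B z (i, p)) * B z (j, q) := by
    intro i j p q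
    have h1 : (Matrix.of fun a b => (vᴴ * v) (i, a) (j, b)) = Matrix.single i j (1 : ℂ) := by
      ext a b
      simp [Matrix.mul_apply, hv, Matrix.single, Fin.sum_univ_one]
      split_ifs with h1 h2 h3 <;> simp_all
    have h2 := congrFun (congrFun hB ((i, p))) ((j, q))
    rw [tensorExt] at h2
    simp only [Matrix.of_apply] at h2
    rw [h1] at h2
    rw [h2, Matrix.mul_apply]
    simp [conjTranspose_apply]
  -- expand ρ
  conv_lhs => rw [matrix_eq_sum_single ρ]
  rw [map_sum]
  ext p q
  simp only [Matrix.sum_apply, map_sum]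
  have lhs_eq : ∀ i j, (Φ (Matrix.single i j (ρ i j))) p q
      = ρ i j * ∑ z : Fin n × Fin m, star (B z (i, p)) * B z (j, q) := by
    intro i j
    have : Matrix.single i j (ρ i j) = ρ i j • Matrix.single i j (1 : ℂ) := by
      rw [smul_single]; norm_num
    rw [this, _root_.map_smul, Matrix.smul_apply, key, smul_eq_mul]
  calc ∑ i, ∑ j, (Φ (Matrix.single i j (ρ i j))) p q
      = ∑ i, ∑ j, ρ i j * ∑ z : Fin n × Fin m, star (B z (i, p)) * B z (j, q) := by
        simp only [lhs_eq]
    _ = ∑ z : Fin n × Fin m, ∑ j, (∑ i, star (B z (i, p)) * ρ i j) * star (star (B z (j, q))) := by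
        have swap : ∀ f : Fin n → Fin n → (Fin n × Fin m) → ℂ,
            ∑ i, ∑ j, ∑ z, f i j z = ∑ z, ∑ j, ∑ i, f i j z := fun f => by
          rw [Finset.sum_comm]
          exact (Finset.sum_congr rfl fun j _ => Finset.sum_comm).trans Finset.sum_comm
        simp only [Finset.mul_sum, star_star, Finset.sum_mul]
        rw [swap]
        exact Finset.sum_congr rfl fun z _ => Finset.sum_congr rfl fun j _ =>
          Finset.sum_congr rfl fun i _ => by ring
    _ = ∑ a : Fin (n * m), (Matrix.of (fun p i => star (B (e a) (i, p))) * ρ *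
          (Matrix.of (fun p i => star (B (e a) (i, p))))ᴴ) p q := by
        rw [← Equiv.sum_comp e (fun z => ∑ j, (∑ i, star (B z (i, p)) * ρ i j) * star (star (B z (j, q))))]
        exact Finset.sum_congr rfl fun a _ => by
          simp [Matrix.mul_apply, conjTranspose_apply]
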